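/- Let A be either A^bi or A^di, and let (s,t) be an A-realisable degree sequence with m=M1(s)=M1(t). Set Δ_S=max_{a∈S}s_a and Δ_T=max_{v∈T}t_v, and suppose 2(Δ_S+1)(Δ_T+1)<m. Then for every av∈A, P_{av}(s,t) ≤ Δ_S·Δ_T / (m·(1−2(Δ_S+1)(Δ_T+1)/m)). -/

import Mathlib

open Finset

lemma switch_filter_card {γ δ : Type*} [DecidableEq γ] [DecidableEq δ]
    (f : γ → δ) (d : δ) (E : Finset γ) (x y x' y' : γ)
    (hx : x ∈ E) (hy : y ∈ E) (hx' : x' ∉ E) (hy' : y' ∉ E)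
    (hxy : x ≠ y) (hxy' : x' ≠ y') (h1 : f x' = f x) (h2 : f y' = f y) :
    ((insert x' (insert y' ((E.erase x).erase y))).filter (fun z => f z = d)).card
      = (E.filter (fun z => f z = d)).card := by
  classical
  set F := E.filter (fun z => f z = d) with hF
  have hxF : f x = d → x ∈ F := fun h => mem_filter.2 ⟨hx, h⟩
  have hyF : f y = d → y ∈ F := fun h => mem_filter.2 ⟨hy, h⟩
  have hx'F : x' ∉ F := fun h => hx' (mem_filter.1 h).1
  have hy'F : y' ∉ F := fun h => hy' (mem_filter.1 h).1
  rw [filter_insert, filter_insert, filter_erase, filter_erase, ← hF]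
  by_cases hdx : f x = d <;> by_cases hdy : f y = d <;>
    simp only [h1, h2, hdx, hdy, if_true, if_false]
  · rw [card_insert_of_notMem, card_insert_of_notMem, card_erase_of_mem, card_erase_of_mem]
    · have h2le : 2 ≤ F.card := one_lt_card.2 ⟨x, hxF hdx, y, hyF hdy, hxy⟩
      omega
    · exact hxF hdx
    · exact mem_erase.2 ⟨fun h => hxy h.symm, hyF hdy⟩
    · simp only [mem_erase]; intro h; exact hy'F h.2.2
    · simp only [mem_insert, mem_erase]
      rintro (h | h)
      · exact hxy' h
      · exact hx'F h.2.2
  · have hynF : y ∉ F.erase x := by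
      simp only [mem_erase, hF, mem_filter]; intro h; exact hdy h.2.2
    rw [erase_eq_of_notMem hynF, card_insert_of_notMem, card_erase_of_mem (hxF hdx)]
    · have : 1 ≤ F.card := card_pos.2 ⟨x, hxF hdx⟩
      omega
    · simp only [mem_erase]; intro h; exact hx'F h.2
  · have hxnF : x ∉ F := by
      simp only [hF, mem_filter]; intro h; exact hdx h.2
    rw [erase_eq_of_notMem hxnF, card_insert_of_notMem, card_erase_of_mem (hyF hdy)]
    · have : 1 ≤ F.card := card_pos.2 ⟨y, hyF hdy⟩
      omega
    · simp only [mem_erase]; intro h; exact hy'F h.2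
  · have hxnF : x ∉ F := by
      simp only [hF, mem_filter]; intro h; exact hdx h.2
    have hynF : y ∉ F.erase x := by
      simp only [mem_erase, hF, mem_filter]; intro h; exact hdy h.2.2
    rw [erase_eq_of_notMem hynF, erase_eq_of_notMem hxnF]

lemma switch_recover {γ : Type*} [DecidableEq γ] (E : Finset γ) (x y x' y' : γ)
    (hx : x ∈ E) (hy : y ∈ E) (hx' : x' ∉ E) (hy' : y' ∉ E)
    (hne1 : x ≠ y) (hne2 : x' ≠ y') (hne3 : x' ≠ x) (hne4 : x' ≠ y)
    (hne5 : y' ≠ x) (hne6 : y' ≠ y) :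
    insert x (insert y (((insert x' (insert y' ((E.erase x).erase y))).erase x').erase y'))
      = E := by
  ext z
  simp only [mem_insert, mem_erase]
  by_cases h1 : z = x <;> by_cases h2 : z = y <;> by_cases h3 : z = x' <;>
    by_cases h4 : z = y' <;> simp_all

lemma row_nbrs_card {α β : Type*} [Fintype β] [DecidableEq α] [DecidableEq β]
    (E : Finset (α × β)) (a : α) :
    (univ.filter (fun u : β => (a, u) ∈ E)).card = (E.filter (fun p => p.1 = a)).card := by
  classical
  apply card_bij (fun u _ => (a, u))
  · intro u hu; exact mem_filter.2 ⟨(mem_filter.1 hu).2, rfl⟩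
  · intro u₁ _ u₂ _ h; exact congrArg Prod.snd h
  · intro p hp
    simp only [mem_filter] at hp
    exact ⟨p.2, by simp only [mem_filter, mem_univ, true_and]; rw [← hp.2]; exact hp.1, by
      rw [← hp.2]⟩

lemma auxcount_row {α β : Type*} [Fintype β] [DecidableEq α] [DecidableEq β]
    (E : Finset (α × β)) (a : α) (Dt : ℕ)
    (ht : ∀ u : β, (E.filter (fun p => p.2 = u)).card ≤ Dt) :
    (E.filter (fun e => (a, e.2) ∈ E)).card ≤ (E.filter (fun p => p.1 = a)).card * Dt := by
  classical
  rw [card_eq_sum_card_fiberwise (f := Prod.snd) (t := univ) (fun x _ => mem_univ _)]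
  have hb : ∀ u : β, ((E.filter (fun e => (a, e.2) ∈ E)).filter (fun e => e.2 = u)).card
      ≤ if (a, u) ∈ E then Dt else 0 := by
    intro u
    by_cases h : (a, u) ∈ E
    · simp only [h, if_true]
      refine le_trans (card_le_card ?_) (ht u)
      intro e he; simp only [mem_filter] at *; exact ⟨he.1.1, he.2⟩
    · simp only [h, if_false, Nat.le_zero, card_eq_zero, eq_empty_iff_forall_notMem]
      intro e he
      simp only [mem_filter] at he
      exact h (he.2 ▸ he.1.2)
  refine le_trans (Finset.sum_le_sum (fun u _ => hb u)) ?_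
  rw [Finset.sum_ite, Finset.sum_const, Finset.sum_const, smul_zero, add_zero, smul_eq_mul,
    row_nbrs_card]

lemma col_nbrs_card {α β : Type*} [Fintype α] [DecidableEq α] [DecidableEq β]
    (E : Finset (α × β)) (v : β) :
    (univ.filter (fun b : α => (b, v) ∈ E)).card = (E.filter (fun p => p.2 = v)).card := by
  classical
  apply card_bij (fun b _ => (b, v))
  · intro b hb; exact mem_filter.2 ⟨(mem_filter.1 hb).2, rfl⟩
  · intro b₁ _ b₂ _ h; exact congrArg Prod.fst h
  · intro p hp
    simp only [mem_filter] at hp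
    exact ⟨p.1, by simp only [mem_filter, mem_univ, true_and]; rw [← hp.2]; exact hp.1, by
      rw [← hp.2]⟩

lemma auxcount_col {α β : Type*} [Fintype α] [DecidableEq α] [DecidableEq β]
    (E : Finset (α × β)) (v : β) (Ds : ℕ)
    (hs : ∀ b : α, (E.filter (fun p => p.1 = b)).card ≤ Ds) :
    (E.filter (fun e => (e.1, v) ∈ E)).card ≤ (E.filter (fun p => p.2 = v)).card * Ds := by
  classical
  rw [card_eq_sum_card_fiberwise (f := Prod.fst) (t := univ) (fun x _ => mem_univ _)]
  have hb : ∀ b : α, ((E.filter (fun e => (e.1, v) ∈ E)).filter (fun e => e.1 = b)).card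
      ≤ if (b, v) ∈ E then Ds else 0 := by
    intro b
    by_cases h : (b, v) ∈ E
    · simp only [h, if_true]
      refine le_trans (card_le_card ?_) (hs b)
      intro e he; simp only [mem_filter] at *; exact ⟨he.1.1, he.2⟩
    · simp only [h, if_false, Nat.le_zero, card_eq_zero, eq_empty_iff_forall_notMem]
      intro e he
      simp only [mem_filter] at he
      exact h (he.2 ▸ he.1.2)
  refine le_trans (Finset.sum_le_sum (fun b _ => hb b)) ?_
  rw [Finset.sum_ite, Finset.sum_const, Finset.sum_const, smul_zero, add_zero, smul_eq_mul,
    col_nbrs_card]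

lemma pairbound {α β : Type*} [Fintype α] [Fintype β] [DecidableEq α] [DecidableEq β]
    (E : Finset (α × β)) (a : α) (v : β) :
    (univ.filter (fun e : α × β => (a, e.2) ∈ E ∧ (e.1, v) ∈ E)).card
      ≤ (E.filter (fun p => p.1 = a)).card * (E.filter (fun p => p.2 = v)).card := by
  classical
  rw [← Finset.card_product]
  apply card_le_card_of_injOn (fun e => ((a, e.2), (e.1, v)))
  · intro e he
    simp only [mem_coe, mem_filter, mem_univ, true_and] at he
    exact Finset.mem_product.2 ⟨mem_filter.2 ⟨he.1, rfl⟩, mem_filter.2 ⟨he.2, rfl⟩⟩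
  · intro e₁ _ e₂ _ h
    simp only [Prod.mk.injEq] at h
    exact Prod.ext h.2.1 h.1.2


/-- `N(s,t)`: the number of bipartite graphs with all edges in the allowable set `A`
realising the degree sequence `(s,t)`. -/
noncomputable def NA (ℓ n : ℕ) (A : Set (Fin ℓ × Fin n)) (s : Fin ℓ → ℕ) (t : Fin n → ℕ) : ℕ :=
  Nat.card {E : Finset (Fin ℓ × Fin n) // ↑E ⊆ A ∧
    (∀ a : Fin ℓ, (E.filter (fun p => p.1 = a)).card = s a) ∧
    (∀ v : Fin n, (E.filter (fun p => p.2 = v)).card = t v)}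

/-- `N_{av}(s,t)`: the number of such graphs containing the edge `(a,v)`. -/
noncomputable def NAe (ℓ n : ℕ) (A : Set (Fin ℓ × Fin n)) (a : Fin ℓ) (v : Fin n)
    (s : Fin ℓ → ℕ) (t : Fin n → ℕ) : ℕ :=
  Nat.card {E : Finset (Fin ℓ × Fin n) // (a, v) ∈ E ∧ ↑E ⊆ A ∧
    (∀ a' : Fin ℓ, (E.filter (fun p => p.1 = a')).card = s a') ∧
    (∀ v' : Fin n, (E.filter (fun p => p.2 = v')).card = t v')}

open Classical in
lemma NA_eq_card (ℓ n : ℕ) (A : Set (Fin ℓ × Fin n)) (s : Fin ℓ → ℕ) (t : Fin n → ℕ) :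
    NA ℓ n A s t = (univ.filter (fun E : Finset (Fin ℓ × Fin n) =>
      (↑E : Set (Fin ℓ × Fin n)) ⊆ A ∧
      (∀ a : Fin ℓ, (E.filter (fun p => p.1 = a)).card = s a) ∧
      (∀ v : Fin n, (E.filter (fun p => p.2 = v)).card = t v))).card := by
  classical
  rw [NA, Nat.card_eq_fintype_card, Fintype.card_subtype]

open Classical in
lemma NAe_eq_card (ℓ n : ℕ) (A : Set (Fin ℓ × Fin n)) (a : Fin ℓ) (v : Fin n)
    (s : Fin ℓ → ℕ) (t : Fin n → ℕ) :
    NAe ℓ n A a v s t = (univ.filter (fun E : Finset (Fin ℓ × Fin n) => (a, v) ∈ E ∧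
      (↑E : Set (Fin ℓ × Fin n)) ⊆ A ∧
      (∀ a' : Fin ℓ, (E.filter (fun p => p.1 = a')).card = s a') ∧
      (∀ v' : Fin n, (E.filter (fun p => p.2 = v')).card = t v'))).card := by
  classical
  rw [NAe, Nat.card_eq_fintype_card, Fintype.card_subtype]

open Classical in
lemma key (ℓ n : ℕ) (A : Set (Fin ℓ × Fin n))
    (hA : A = Set.univ ∨ ∃ _h : ℓ = n, A = {p : Fin ℓ × Fin n | (p.1 : ℕ) ≠ (p.2 : ℕ)})
    (s : Fin ℓ → ℕ) (t : Fin n → ℕ) (m : ℕ)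
    (hms : ∑ a, s a = m) (hmt : ∑ v, t v = m) (a : Fin ℓ) (v : Fin n) :
    NAe ℓ n A a v s t * (m - 2 * (univ.sup s + 1) * (univ.sup t + 1))
      ≤ NA ℓ n A s t * (univ.sup s * univ.sup t) := by
  classical
  set Ds := univ.sup s with hDs
  set Dt := univ.sup t with hDt
  set B := 2 * (Ds + 1) * (Dt + 1) with hB
  set P : Finset (Fin ℓ × Fin n) → Prop := fun E => (↑E : Set (Fin ℓ × Fin n)) ⊆ A ∧
    (∀ a' : Fin ℓ, (E.filter (fun p => p.1 = a')).card = s a') ∧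
    (∀ v' : Fin n, (E.filter (fun p => p.2 = v')).card = t v') with hP
  set G := univ.filter P with hG
  set Ge := univ.filter (fun E => (a, v) ∈ E ∧ P E) with hGe
  have hNAG : NA ℓ n A s t = G.card := by rw [NA_eq_card, hG]
  have hNAeG : NAe ℓ n A a v s t = Ge.card := by rw [NAe_eq_card, hGe]
  -- every realisation has m edges
  have hcard : ∀ E : Finset (Fin ℓ × Fin n), P E → E.card = m := by
    intro E hE
    rw [card_eq_sum_card_fiberwise (f := Prod.fst) (t := univ) (fun x _ => mem_univ _), ← hms]
    exact Finset.sum_congr rfl (fun a' _ => hE.2.1 a')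
  -- the good switching edges
  set goodSet : Finset (Fin ℓ × Fin n) → Finset (Fin ℓ × Fin n) := fun E =>
    E.filter (fun e => ¬e.1 = a ∧ ¬e.2 = v ∧ (a, e.2) ∉ E ∧ (e.1, v) ∉ E ∧
      (a, e.2) ∈ A ∧ (e.1, v) ∈ A) with hgoodSet
  have hgood : ∀ E : Finset (Fin ℓ × Fin n), P E → (a, v) ∈ E →
      m - B ≤ (goodSet E).card := by
    intro E hE havE
    have hEm : E.card = m := hcard E hE
    have hsplit : (goodSet E).card + (E.filter (fun e : Fin ℓ × Fin n => ¬(¬e.1 = a ∧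
        ¬e.2 = v ∧ (a, e.2) ∉ E ∧ (e.1, v) ∉ E ∧ (a, e.2) ∈ A ∧ (e.1, v) ∈ A))).card
        = E.card := card_filter_add_card_filter_not _
    set X1 := E.filter (fun e : Fin ℓ × Fin n => e.1 = a) with hX1
    set X2 := E.filter (fun e : Fin ℓ × Fin n => e.2 = v) with hX2
    set X3 := E.filter (fun e : Fin ℓ × Fin n => (a, e.2) ∈ E) with hX3
    set X4 := E.filter (fun e : Fin ℓ × Fin n => (e.1, v) ∈ E) with hX4
    set X5 := E.filter (fun e : Fin ℓ × Fin n => (a, e.2) ∉ A) with hX5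
    set X6 := E.filter (fun e : Fin ℓ × Fin n => (e.1, v) ∉ A) with hX6
    have hsub : E.filter (fun e : Fin ℓ × Fin n => ¬(¬e.1 = a ∧ ¬e.2 = v ∧ (a, e.2) ∉ E ∧
        (e.1, v) ∉ E ∧ (a, e.2) ∈ A ∧ (e.1, v) ∈ A)) ⊆ X1 ∪ X2 ∪ X3 ∪ X4 ∪ X5 ∪ X6 := by
      intro e he
      simp only [hX1, hX2, hX3, hX4, hX5, hX6, mem_filter, mem_union] at he ⊢
      tauto
    have hb1 : X1.card ≤ Ds := by
      rw [hX1, hE.2.1 a]; exact Finset.le_sup (mem_univ a)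
    have hb2 : X2.card ≤ Dt := by
      rw [hX2, hE.2.2 v]; exact Finset.le_sup (mem_univ v)
    have hb3 : X3.card ≤ Ds * Dt := by
      refine le_trans (auxcount_row E a Dt (fun u => by
        rw [hE.2.2 u]; exact Finset.le_sup (mem_univ u))) ?_
      rw [hE.2.1 a]
      exact Nat.mul_le_mul_right _ (Finset.le_sup (mem_univ a))
    have hb4 : X4.card ≤ Dt * Ds := by
      refine le_trans (auxcount_col E v Ds (fun b => by
        rw [hE.2.1 b]; exact Finset.le_sup (mem_univ b))) ?_
      rw [hE.2.2 v]
      exact Nat.mul_le_mul_right _ (Finset.le_sup (mem_univ v))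
    have hb5 : X5.card ≤ Dt := by
      rcases hA with hA1 | ⟨h, hA2⟩
      · have : X5 = ∅ := by
          rw [hX5, filter_eq_empty_iff]
          intro e _
          simp [hA1]
        simp [this]
      · have hlt : (a : ℕ) < n := by rw [← h]; exact a.isLt
        set u₀ : Fin n := ⟨(a : ℕ), hlt⟩ with hu₀
        have hsub5 : X5 ⊆ E.filter (fun p => p.2 = u₀) := by
          intro e he
          rw [hX5, mem_filter] at he
          rw [mem_filter]
          refine ⟨he.1, ?_⟩
          have := he.2
          rw [hA2] at this
          simp only [Set.mem_setOf_eq, not_not] at this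
          exact Fin.ext (by simpa [hu₀] using this.symm)
        refine le_trans (card_le_card hsub5) ?_
        rw [hE.2.2 u₀]; exact Finset.le_sup (mem_univ u₀)
    have hb6 : X6.card ≤ Ds := by
      rcases hA with hA1 | ⟨h, hA2⟩
      · have : X6 = ∅ := by
          rw [hX6, filter_eq_empty_iff]
          intro e _
          simp [hA1]
        simp [this]
      · have hlt : (v : ℕ) < ℓ := by rw [h]; exact v.isLt
        set v₀ : Fin ℓ := ⟨(v : ℕ), hlt⟩ with hv₀
        have hsub6 : X6 ⊆ E.filter (fun p => p.1 = v₀) := by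
          intro e he
          rw [hX6, mem_filter] at he
          rw [mem_filter]
          refine ⟨he.1, ?_⟩
          have := he.2
          rw [hA2] at this
          simp only [Set.mem_setOf_eq, not_not] at this
          exact Fin.ext (by simpa [hv₀] using this)
        refine le_trans (card_le_card hsub6) ?_
        rw [hE.2.1 v₀]; exact Finset.le_sup (mem_univ v₀)
    have hbad : (E.filter (fun e : Fin ℓ × Fin n => ¬(¬e.1 = a ∧ ¬e.2 = v ∧ (a, e.2) ∉ E ∧
        (e.1, v) ∉ E ∧ (a, e.2) ∈ A ∧ (e.1, v) ∈ A))).card ≤ B := by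
      calc (E.filter _).card ≤ (X1 ∪ X2 ∪ X3 ∪ X4 ∪ X5 ∪ X6).card := card_le_card hsub
        _ ≤ (X1 ∪ X2 ∪ X3 ∪ X4 ∪ X5).card + X6.card := card_union_le _ _
        _ ≤ ((X1 ∪ X2 ∪ X3 ∪ X4).card + X5.card) + X6.card :=
            add_le_add_left (card_union_le _ _) _
        _ ≤ (((X1 ∪ X2 ∪ X3).card + X4.card) + X5.card) + X6.card :=
            by have := card_union_le (X1 ∪ X2 ∪ X3) X4; omega
        _ ≤ ((((X1 ∪ X2).card + X3.card) + X4.card) + X5.card) + X6.card :=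
            by have := card_union_le (X1 ∪ X2) X3; omega
        _ ≤ ((((X1.card + X2.card) + X3.card) + X4.card) + X5.card) + X6.card :=
            by have := card_union_le X1 X2; omega
        _ ≤ ((((Ds + Dt) + Ds * Dt) + Dt * Ds) + Dt) + Ds :=
            add_le_add (add_le_add (add_le_add (add_le_add (add_le_add hb1 hb2) hb3) hb4) hb5) hb6
        _ ≤ B := by
            have hc : Dt * Ds = Ds * Dt := Nat.mul_comm _ _
            have hBeq : B = Ds * Dt + Ds * Dt + 2 * Ds + 2 * Dt + 2 := by rw [hB]; ring
            rw [hc, hBeq]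
            omega
    omega
  -- the switching map
  set Φ : Finset (Fin ℓ × Fin n) × (Fin ℓ × Fin n) →
      Finset (Fin ℓ × Fin n) × (Fin ℓ × Fin n) := fun z =>
    (insert (a, z.2.2) (insert (z.2.1, v) ((z.1.erase (a, v)).erase z.2)), z.2) with hΦ
  set Pairs := Ge.biUnion (fun E => (goodSet E).image (fun e => (E, e))) with hPairs
  set Pairs' := G.biUnion (fun F => (univ.filter
    (fun e : Fin ℓ × Fin n => (a, e.2) ∈ F ∧ (e.1, v) ∈ F)).image (fun e => (F, e)))
    with hPairs'
  have hdisj : ∀ E1 ∈ Ge, ∀ E2 ∈ Ge, E1 ≠ E2 →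
      Disjoint ((goodSet E1).image (fun e => (E1, e))) ((goodSet E2).image (fun e => (E2, e))) := by
    intro E1 _ E2 _ hne
    rw [Finset.disjoint_left]
    rintro z hz1 hz2
    obtain ⟨e1, _, rfl⟩ := mem_image.1 hz1
    obtain ⟨e2, _, heq⟩ := mem_image.1 hz2
    exact hne (congrArg Prod.fst heq).symm
  have h1 : Ge.card * (m - B) ≤ Pairs.card := by
    calc Ge.card * (m - B) = Ge.card • (m - B) := (smul_eq_mul _ _).symm
      _ ≤ ∑ E ∈ Ge, ((goodSet E).image (fun e => (E, e))).card := by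
          refine card_nsmul_le_sum _ _ _ (fun E hE => ?_)
          rw [card_image_of_injective _ (fun e1 e2 h => congrArg Prod.snd h)]
          exact hgood E (mem_filter.1 hE).2.2 (mem_filter.1 hE).2.1
      _ = Pairs.card := (card_biUnion hdisj).symm
  have h2 : Pairs.card ≤ Pairs'.card := by
    apply card_le_card_of_injOn Φ
    · intro z hz
      rw [hPairs, Finset.mem_coe, mem_biUnion] at hz
      obtain ⟨E, hEGe, hzim⟩ := hz
      obtain ⟨e, hegood, rfl⟩ := mem_image.1 hzim
      obtain ⟨havE, hPE⟩ := (mem_filter.1 hEGe).2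
      rw [hgoodSet, mem_filter] at hegood
      obtain ⟨heE, hc1, hc2, hc3, hc4, hc5, hc6⟩ := hegood
      have n1 : (a, v) ≠ e := fun h => hc1 (congrArg Prod.fst h).symm
      have n2 : (a, e.2) ≠ (e.1, v) := fun h => hc1 (congrArg Prod.fst h).symm
      have hE'G : insert (a, e.2) (insert (e.1, v) ((E.erase (a, v)).erase e)) ∈ G := by
        rw [hG, mem_filter]
        refine ⟨mem_univ _, ?_, ?_, ?_⟩
        · intro z hz
          rw [mem_coe] at hz
          rcases mem_insert.1 hz with rfl | hz
          · exact hc5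
          rcases mem_insert.1 hz with rfl | hz
          · exact hc6
          exact hPE.1 (mem_coe.2 (mem_of_mem_erase (mem_of_mem_erase hz)))
        · intro a'
          rw [switch_filter_card Prod.fst a' E (a, v) e (a, e.2) (e.1, v) havE heE hc3 hc4
            n1 n2 rfl rfl]
          exact hPE.2.1 a'
        · intro v'
          rw [Finset.erase_right_comm (a := (a, v)) (b := e),
            switch_filter_card Prod.snd v' E e (a, v) (a, e.2) (e.1, v) heE havE hc3 hc4
              (fun h => hc2 (congrArg Prod.snd h)) n2 rfl rfl]
          exact hPE.2.2 v'
      rw [hPairs', Finset.mem_coe, mem_biUnion]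
      refine ⟨_, hE'G, mem_image.2 ⟨e, mem_filter.2 ⟨mem_univ _, mem_insert_self _ _,
        mem_insert_of_mem (mem_insert_self _ _)⟩, rfl⟩⟩
    · intro z1 hz1 z2 hz2 heq
      rw [Finset.mem_coe, hPairs, mem_biUnion] at hz1 hz2
      obtain ⟨E1, hE1, hz1im⟩ := hz1
      obtain ⟨e1, he1good, rfl⟩ := mem_image.1 hz1im
      obtain ⟨E2, hE2, hz2im⟩ := hz2
      obtain ⟨e2, he2good, rfl⟩ := mem_image.1 hz2im
      have hee : e1 = e2 := congrArg Prod.snd heq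
      subst hee
      have hEE : insert (a, e1.2) (insert (e1.1, v) ((E1.erase (a, v)).erase e1))
          = insert (a, e1.2) (insert (e1.1, v) ((E2.erase (a, v)).erase e1)) :=
        congrArg Prod.fst heq
      rw [hgoodSet, mem_filter] at he1good he2good
      obtain ⟨heE1, hc1, hc2, hc3, hc4, hc5, hc6⟩ := he1good
      obtain ⟨heE2, hd1, hd2, hd3, hd4, hd5, hd6⟩ := he2good
      have havE1 : (a, v) ∈ E1 := (mem_filter.1 hE1).2.1
      have havE2 : (a, v) ∈ E2 := (mem_filter.1 hE2).2.1
      have n1 : (a, v) ≠ e1 := fun h => hc1 (congrArg Prod.fst h).symm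
      have n2 : (a, e1.2) ≠ (e1.1, v) := fun h => hc1 (congrArg Prod.fst h).symm
      have n3 : (a, e1.2) ≠ (a, v) := fun h => hc2 (congrArg Prod.snd h)
      have n4 : (a, e1.2) ≠ e1 := fun h => hc1 (congrArg Prod.fst h).symm
      have n5 : (e1.1, v) ≠ (a, v) := fun h => hc1 (congrArg Prod.fst h)
      have n6 : (e1.1, v) ≠ e1 := fun h => hc2 (congrArg Prod.snd h).symm
      have hr1 := switch_recover E1 (a, v) e1 (a, e1.2) (e1.1, v) havE1 heE1 hc3 hc4
        n1 n2 n3 n4 n5 n6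
      have hr2 := switch_recover E2 (a, v) e1 (a, e1.2) (e1.1, v) havE2 heE2 hd3 hd4
        n1 n2 n3 n4 n5 n6
      have : E1 = E2 := by rw [← hr1, ← hr2, hEE]
      rw [this]
  have h3 : Pairs'.card ≤ G.card * (Ds * Dt) := by
    refine le_trans card_biUnion_le ?_
    calc ∑ F ∈ G, ((univ.filter
          (fun e : Fin ℓ × Fin n => (a, e.2) ∈ F ∧ (e.1, v) ∈ F)).image (fun e => (F, e))).card
        ≤ G.card • (Ds * Dt) := by
          refine sum_le_card_nsmul _ _ _ (fun F hF => ?_)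
          have hPF := (mem_filter.1 hF).2
          refine le_trans card_image_le (le_trans (pairbound F a v) ?_)
          rw [hPF.2.1 a, hPF.2.2 v]
          exact Nat.mul_le_mul (Finset.le_sup (mem_univ a)) (Finset.le_sup (mem_univ v))
      _ = G.card * (Ds * Dt) := smul_eq_mul _ _
  rw [hNAG, hNAeG]
  exact le_trans h1 (le_trans h2 h3)

/-- Switching upper bound for the edge probability `P_{av}(s,t)` (Lemma 2.4),
where `A` is either `A^bi` or `A^di`. -/
theorem stmt_9 (ℓ n : ℕ) (hℓ : 0 < ℓ) (hn : 0 < n) (A : Set (Fin ℓ × Fin n))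
    (hA : A = Set.univ ∨
      ∃ _h : ℓ = n, A = {p : Fin ℓ × Fin n | (p.1 : ℕ) ≠ (p.2 : ℕ)})
    (s : Fin ℓ → ℕ) (t : Fin n → ℕ) (m : ℕ)
    (hms : ∑ a, s a = m) (hmt : ∑ v, t v = m)
    (hreal : 0 < NA ℓ n A s t)
    (hmbig : 2 * (Finset.univ.sup s + 1) * (Finset.univ.sup t + 1) < m) :
    ∀ (a : Fin ℓ) (v : Fin n), (a, v) ∈ A →
      (NAe ℓ n A a v s t : ℝ) / (NA ℓ n A s t : ℝ) ≤
        ((Finset.univ.sup s : ℕ) : ℝ) * ((Finset.univ.sup t : ℕ) : ℝ) /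
          ((m : ℝ) * (1 - 2 * (((Finset.univ.sup s : ℕ) : ℝ) + 1) *
            (((Finset.univ.sup t : ℕ) : ℝ) + 1) / (m : ℝ))) := by
  intro a v _hav
  have hkey := key ℓ n A hA s t m hms hmt a v
  set Ds := Finset.univ.sup s with hDs
  set Dt := Finset.univ.sup t with hDt
  have hm0 : 0 < m := lt_of_le_of_lt (Nat.zero_le _) hmbig
  have hmR : (0 : ℝ) < (m : ℝ) := by exact_mod_cast hm0
  have hNAR : (0 : ℝ) < (NA ℓ n A s t : ℝ) := by exact_mod_cast hreal
  have hden : (m : ℝ) * (1 - 2 * (((Ds : ℕ) : ℝ) + 1) * (((Dt : ℕ) : ℝ) + 1) / (m : ℝ))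
      = ((m - 2 * (Ds + 1) * (Dt + 1) : ℕ) : ℝ) := by
    rw [Nat.cast_sub hmbig.le]
    push_cast
    field_simp
  have hdenpos : (0 : ℝ) < ((m - 2 * (Ds + 1) * (Dt + 1) : ℕ) : ℝ) := by
    have : 0 < m - 2 * (Ds + 1) * (Dt + 1) := by omega
    exact_mod_cast this
  rw [hden, div_le_div_iff₀ hNAR hdenpos]
  have hR : (NAe ℓ n A a v s t : ℝ) * ((m - 2 * (Ds + 1) * (Dt + 1) : ℕ) : ℝ)
      ≤ (NA ℓ n A s t : ℝ) * (((Ds : ℕ) : ℝ) * ((Dt : ℕ) : ℝ)) := by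
    exact_mod_cast hkey
  linarith
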